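/- Let F be a field and X, Y, Z pairwise disjoint finite variable types; work in R = MvPolynomial (X ⊕ Y ⊕ Z) F. Let P₀ be a finite set of polynomials in MvPolynomial.supported F (X ∪ Z) that is in monotone z-normal form, and let P₁ be a finite set of polynomials in MvPolynomial.supported F (Y ∪ Z). Suppose there exist polynomials (a_p)_{p ∈ P₀} and (b_q)_{q ∈ P₁} in R, each computed by a width-w roABP in a variable order σ in which the X-variables precede all others, such that Σ_{p ∈ P₀} a_p · p + Σ_{q ∈ P₁} b_q · q = 1. Then there exists a monotone span program over Boolean variables indexed by Z, with vectors in R, of size at most 2·w·|P₀|, that computes an interpolant for (P₀, P₁). -/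

import Mathlib

/-- A polynomial `f` is computed by a width-`w` roABP in variable order `σ`. -/
def ROABP {F : Type} [Field F] {V : Type} [Fintype V] {n : ℕ}
    (σ : Fin n ≃ V) (w : ℕ) (f : MvPolynomial V F) : Prop :=
  ∃ (hw : 0 < w) (M : Fin n → Matrix (Fin w) (Fin w) (MvPolynomial V F)),
    (∀ k i j, M k i j ∈ MvPolynomial.supported F ({σ k} : Set V)) ∧
    f = (List.ofFn M).prod ⟨0, hw⟩ ⟨0, hw⟩

/-- A row label of a span program: a positive literal, a negative literal, or the constant 1. -/
inductive SPLabel (Z : Type) where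
  | pos (i : Z)
  | neg (i : Z)
  | one

/-- Evaluation of a label under a Boolean assignment. -/
def SPLabel.evalb {Z : Type} (α : Z → Bool) : SPLabel Z → Bool
  | pos i => α i
  | neg i => !(α i)
  | one => true

/-- A span program over Boolean variables indexed by `Z` with vectors in `V₀`. -/
structure SpanProgram (F : Type) [Field F] (Z : Type) (V₀ : Type)
    [AddCommGroup V₀] [Module F V₀] where
  S : Type
  finS : Fintype S
  label : S → SPLabel Z
  vec : S → V₀
  target : V₀

/-- The size of a span program is the number of its rows. -/
def SpanProgram.size {F Z V₀ : Type} [Field F] [AddCommGroup V₀] [Module F V₀]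
    (P : SpanProgram F Z V₀) : ℕ := @Fintype.card P.S P.finS

/-- Acceptance: the target is in the span of vectors whose label evaluates to `true`. -/
def SpanProgram.accepts {F Z V₀ : Type} [Field F] [AddCommGroup V₀] [Module F V₀]
    (P : SpanProgram F Z V₀) (α : Z → Bool) : Prop :=
  P.target ∈ Submodule.span F (P.vec '' {s | (P.label s).evalb α = true})

/-- A span program is monotone if no row is labelled by a negated literal. -/
def SpanProgram.IsMonotone {F Z V₀ : Type} [Field F] [AddCommGroup V₀] [Module F V₀]
    (P : SpanProgram F Z V₀) : Prop := ∀ s i, P.label s ≠ SPLabel.neg i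

/-- Interpretation of a Boolean value in a field. -/
def boolToField (F : Type) [Field F] (b : Bool) : F := if b then 1 else 0

open MvPolynomial in
lemma aux_eqOn_supported {F : Type} [CommSemiring F] {V A : Type} [CommSemiring A] [Algebra F A]
    (f g : MvPolynomial V F →ₐ[F] A) {s : Set V} {p : MvPolynomial V F}
    (hp : p ∈ supported F s) (h : ∀ v ∈ s, f (X v) = g (X v)) : f p = g p := by
  rw [supported_eq_adjoin_X] at hp
  induction hp using Algebra.adjoin_induction with
  | mem x hx => obtain ⟨v, hv, rfl⟩ := hx; exact h v hv
  | algebraMap r => simp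
  | add x y hx hy ihx ihy => simp [ihx, ihy]
  | mul x y hx hy ihx ihy => simp [ihx, ihy]

open MvPolynomial in
lemma aux_mem_supported {F : Type} [CommSemiring F] {V A : Type} [CommSemiring A] [Algebra F A]
    (f : MvPolynomial V F →ₐ[F] A) (T : Subalgebra F A) {s : Set V} {p : MvPolynomial V F}
    (hp : p ∈ supported F s) (h : ∀ v ∈ s, f (X v) ∈ T) : f p ∈ T := by
  rw [supported_eq_adjoin_X] at hp
  induction hp using Algebra.adjoin_induction with
  | mem x hx => obtain ⟨v, hv, rfl⟩ := hx; exact h v hv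
  | algebraMap r => simpa using T.algebraMap_mem r
  | add x y hx hy ihx ihy => simpa using T.add_mem ihx ihy
  | mul x y hx hy ihx ihy => simpa using T.mul_mem ihx ihy

lemma aux_aeval_eq_eval {F : Type} [Field F] {V : Type} (x : V → F) (p : MvPolynomial V F) :
    MvPolynomial.aeval x p = MvPolynomial.eval x p := by
  rw [MvPolynomial.aeval_def, MvPolynomial.eval, Algebra.algebraMap_self]; rfl

/-- Monotone feasible interpolation for roABP-IPS_LIN: from a width-$w$
roABP-IPS_LIN refutation of $P_0 ∪ P_1$, in a variable order where the $X$-variables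
come first and with $P_0$ in monotone $z$-normal form, one can extract a *monotone*
span program of size at most $2·w·|P_0|$ computing an interpolant for $(P_0, P_1)$. -/
theorem stmt_2 (F : Type) [Field F]
    (X Y Z : Type) [Fintype X] [Fintype Y] [Fintype Z]
    (P₀ P₁ : Finset (MvPolynomial (X ⊕ Y ⊕ Z) F))
    -- P₀ is supported on the X- and Z-variables
    (hP₀supp : ∀ p ∈ P₀, p ∈ MvPolynomial.supported F
      (Set.range (Sum.inl : X → X ⊕ Y ⊕ Z) ∪
        Set.range ((Sum.inr ∘ Sum.inr) : Z → X ⊕ Y ⊕ Z)))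
    -- P₀ is in monotone z-normal form
    (hP₀nf : ∀ p ∈ P₀,
      p ∈ MvPolynomial.supported F (Set.range (Sum.inl : X → X ⊕ Y ⊕ Z)) ∨
      ∃ (j : Z) (p'' : MvPolynomial (X ⊕ Y ⊕ Z) F),
        p'' ∈ MvPolynomial.supported F (Set.range (Sum.inl : X → X ⊕ Y ⊕ Z)) ∧
        p = MvPolynomial.X (Sum.inr (Sum.inr j)) * p'')
    -- P₁ is supported on the Y- and Z-variables
    (hP₁supp : ∀ q ∈ P₁, q ∈ MvPolynomial.supported F
      (Set.range ((Sum.inr ∘ Sum.inl) : Y → X ⊕ Y ⊕ Z) ∪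
        Set.range ((Sum.inr ∘ Sum.inr) : Z → X ⊕ Y ⊕ Z)))
    (w : ℕ) (σ : Fin (Fintype.card (X ⊕ Y ⊕ Z)) ≃ (X ⊕ Y ⊕ Z))
    -- the X-variables precede all other variables in σ
    (hσ : ∀ k : Fin (Fintype.card (X ⊕ Y ⊕ Z)), (k : ℕ) < Fintype.card X ↔ ∃ x : X, σ k = Sum.inl x)
    (a b : MvPolynomial (X ⊕ Y ⊕ Z) F → MvPolynomial (X ⊕ Y ⊕ Z) F)
    (ha : ∀ p ∈ P₀, ROABP σ w (a p))
    (hb : ∀ q ∈ P₁, ROABP σ w (b q))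
    (hrefut : (∑ p ∈ P₀, a p * p) + (∑ q ∈ P₁, b q * q) = 1) :
    ∃ SP : SpanProgram F Z (MvPolynomial (X ⊕ Y ⊕ Z) F),
      SP.size ≤ 2 * w * P₀.card ∧
      SP.IsMonotone ∧
      -- SP computes an interpolant for (P₀, P₁):
      (∀ α : Z → Bool,
        (∃ x : X → Bool, ∀ p ∈ P₀,
          MvPolynomial.eval
            (Sum.elim (fun v => boolToField F (x v))
              (Sum.elim (fun _ : Y => (0 : F)) (fun i => boolToField F (α i)))) p = 0) →
        ¬ SP.accepts α) ∧
      (∀ α : Z → Bool,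
        (∃ y : Y → Bool, ∀ q ∈ P₁,
          MvPolynomial.eval
            (Sum.elim (fun _ : X => (0 : F))
              (Sum.elim (fun v => boolToField F (y v)) (fun i => boolToField F (α i)))) q = 0) →
        SP.accepts α) := by
  classical
  simp only [ROABP] at ha
  choose hw M hMs hMe using ha
  have key : ∀ s : {p // p ∈ P₀}, ∃ (l : SPLabel Z) (h : MvPolynomial (X ⊕ Y ⊕ Z) F),
      h ∈ MvPolynomial.supported F (Set.range (Sum.inl : X → X ⊕ Y ⊕ Z)) ∧
      ((l = SPLabel.one ∧ (s : MvPolynomial (X ⊕ Y ⊕ Z) F) = h) ∨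
       (∃ j : Z, l = SPLabel.pos j ∧
         (s : MvPolynomial (X ⊕ Y ⊕ Z) F) = MvPolynomial.X (Sum.inr (Sum.inr j)) * h)) := by
    intro s
    rcases hP₀nf s.1 s.2 with h | ⟨j, p'', hs, hEq⟩
    · exact ⟨SPLabel.one, s.1, h, Or.inl ⟨rfl, rfl⟩⟩
    · exact ⟨SPLabel.pos j, p'', hs, Or.inr ⟨j, rfl, hEq⟩⟩
  choose lab hat hhat hcase using key
  set m := Fintype.card X with hm
  set Pre : {p // p ∈ P₀} → Matrix (Fin w) (Fin w) (MvPolynomial (X ⊕ Y ⊕ Z) F) :=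
    fun s => ((List.ofFn (M s.1 s.2)).take m).prod with hPre
  set i0 : {p // p ∈ P₀} → Fin w := fun s => ⟨0, hw s.1 s.2⟩ with hi0
  refine ⟨{ S := {p // p ∈ P₀} × Fin w
            finS := inferInstance
            label := fun t => lab t.1
            vec := fun t => Pre t.1 (i0 t.1) t.2 * hat t.1
            target := 1 }, ?_, ?_, ?_, ?_⟩
  · -- size
    simp only [SpanProgram.size, Fintype.card_prod, Fintype.card_coe, Fintype.card_fin]
    nlinarith [P₀.card.zero_le, w.zero_le]
  · -- monotone
    rintro t j h
    dsimp only at h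
    rcases hcase t.1 with ⟨h1, -⟩ | ⟨i, h1, -⟩ <;> rw [h1] at h <;> exact nomatch h
  · -- soundness
    rintro α ⟨x₀, hx⟩ hacc
    dsimp only [SpanProgram.accepts] at hacc
    set pt₀ : X ⊕ Y ⊕ Z → F := Sum.elim (fun v => boolToField F (x₀ v))
      (Sum.elim (fun _ : Y => (0 : F)) (fun i => boolToField F (α i))) with hpt₀
    have hsub : ((fun t : {p // p ∈ P₀} × Fin w => Pre t.1 (i0 t.1) t.2 * hat t.1) ''
        {s | SPLabel.evalb α (lab s.1) = true}) ⊆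
        (LinearMap.ker (MvPolynomial.aeval pt₀ :
          MvPolynomial (X ⊕ Y ⊕ Z) F →ₐ[F] F).toLinearMap : Submodule F _) := by
      rintro v ⟨t, ht, rfl⟩
      have hhat0 : MvPolynomial.eval pt₀ (hat t.1) = 0 := by
        rcases hcase t.1 with ⟨h1, h2⟩ | ⟨j, h1, h2⟩
        · rw [← h2]; exact hx t.1.1 t.1.2
        · have h3 := hx t.1.1 t.1.2
          rw [h2, map_mul, MvPolynomial.eval_X] at h3
          have ht' : SPLabel.evalb α (lab t.1) = true := ht
          have hαj : α j = true := by rw [h1] at ht'; exact ht'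
          have hone : pt₀ (Sum.inr (Sum.inr j)) = 1 := by
            simp [hpt₀, boolToField, hαj]
          rw [hone, one_mul] at h3; exact h3
      simp only [SetLike.mem_coe, LinearMap.mem_ker, AlgHom.toLinearMap_apply, map_mul]
      rw [aux_aeval_eq_eval pt₀ (hat t.1), hhat0, mul_zero]
    have h4 := Submodule.span_le.mpr hsub hacc
    simp only [LinearMap.mem_ker, AlgHom.toLinearMap_apply, map_one] at h4
    exact one_ne_zero h4
  · -- completeness
    rintro α ⟨y, hy⟩
    set φ : X ⊕ Y ⊕ Z → MvPolynomial (X ⊕ Y ⊕ Z) F :=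
      Sum.elim (fun x => MvPolynomial.X (Sum.inl x))
        (Sum.elim (fun v => MvPolynomial.C (boolToField F (y v)))
          (fun i => MvPolynomial.C (boolToField F (α i)))) with hφ
    set E : MvPolynomial (X ⊕ Y ⊕ Z) F →ₐ[F] MvPolynomial (X ⊕ Y ⊕ Z) F :=
      MvPolynomial.aeval φ with hE
    set pt : X ⊕ Y ⊕ Z → F := Sum.elim (fun _ : X => (0 : F))
      (Sum.elim (fun v => boolToField F (y v)) (fun i => boolToField F (α i))) with hpt
    have hcomp : (MvPolynomial.aeval pt).comp E =
        (MvPolynomial.aeval pt : MvPolynomial (X ⊕ Y ⊕ Z) F →ₐ[F] F) := by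
      apply MvPolynomial.algHom_ext
      rintro (x | yv | j) <;> simp [hE, hφ, hpt]
    have hq0 : ∀ q ∈ P₁, E q = 0 := by
      intro q hq
      have hmem : E q ∈ (⊥ : Subalgebra F (MvPolynomial (X ⊕ Y ⊕ Z) F)) := by
        refine aux_mem_supported E ⊥ (hP₁supp q hq) ?_
        rintro v (⟨yv, rfl⟩ | ⟨j, rfl⟩)
        · rw [Algebra.mem_bot, MvPolynomial.algebraMap_eq]
          exact ⟨boolToField F (y yv), by simp [hE, hφ]⟩
        · rw [Algebra.mem_bot, MvPolynomial.algebraMap_eq]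
          exact ⟨boolToField F (α j), by simp [hE, hφ]⟩
      rw [Algebra.mem_bot] at hmem
      obtain ⟨c, hc⟩ := hmem
      have h1 : MvPolynomial.aeval pt (E q) = MvPolynomial.eval pt q := by
        rw [show MvPolynomial.aeval pt (E q) = ((MvPolynomial.aeval pt).comp E) q from rfl,
          hcomp, aux_aeval_eq_eval]
      have h2 : MvPolynomial.eval pt q = 0 := hy q hq
      have h3 : c = 0 := by
        have := (MvPolynomial.aeval pt).commutes c
        rw [hc, h1, h2] at this
        simpa using this.symm
      rw [← hc, h3, map_zero]
    have hmain : (∑ p ∈ P₀, E (a p) * E p) = 1 := by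
      have h4 := congrArg E hrefut
      rw [map_add, map_sum, map_sum, map_one] at h4
      simp only [map_mul] at h4
      have h5 : ∑ q ∈ P₁, E (b q) * E q = 0 :=
        Finset.sum_eq_zero (fun q hq => by rw [hq0 q hq, mul_zero])
      rwa [h5, add_zero] at h4
    have hEa : ∀ s : {p // p ∈ P₀}, ∃ N : Matrix (Fin w) (Fin w) F,
        E (a s.1) = ∑ i : Fin w, Pre s (i0 s) i * MvPolynomial.C (N i (i0 s)) := by
      intro s
      set L := List.ofFn (M s.1 s.2) with hL
      have hLlen : L.length = Fintype.card (X ⊕ Y ⊕ Z) := by simp [hL]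
      have htake : (L.take m).map E.mapMatrix = L.take m := by
        apply List.ext_getElem (by simp)
        intro k h1 h2
        have hkm : k < m := by
          rw [List.length_take] at h2; exact lt_of_lt_of_le h2 (min_le_left _ _)
        have hkn : k < Fintype.card (X ⊕ Y ⊕ Z) := by
          rw [List.length_take, hLlen] at h2; exact lt_of_lt_of_le h2 (min_le_right _ _)
        rw [List.getElem_map]
        simp only [hL, List.getElem_take, List.getElem_ofFn]
        obtain ⟨x, hx⟩ := (hσ ⟨k, hkn⟩).mp hkm
        refine Matrix.ext fun i j => ?_
        rw [AlgHom.mapMatrix_apply, Matrix.map_apply]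
        refine aux_eqOn_supported E (AlgHom.id F _) (hMs s.1 s.2 _ i j) ?_
        intro v hv
        rw [Set.mem_singleton_iff] at hv
        subst hv
        rw [hx]
        simp [hE, hφ]
      have hdrop : ∃ N : Matrix (Fin w) (Fin w) F,
          ((L.drop m).map E.mapMatrix).prod = N.map MvPolynomial.C := by
        have hmem : ∀ A ∈ (L.drop m).map E.mapMatrix,
            A ∈ (RingHom.mapMatrix (MvPolynomial.C : F →+* MvPolynomial (X ⊕ Y ⊕ Z) F) :
              Matrix (Fin w) (Fin w) F →+* Matrix (Fin w) (Fin w) (MvPolynomial (X ⊕ Y ⊕ Z) F)).range := by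
          intro A hA
          obtain ⟨B, hB, rfl⟩ := List.mem_map.mp hA
          obtain ⟨k', hk', hBk⟩ := List.mem_iff_getElem.mp hB
          have hidx : m + k' < Fintype.card (X ⊕ Y ⊕ Z) := by
            rw [List.length_drop, hLlen] at hk'; omega
          have hBeq : B = M s.1 s.2 ⟨m + k', hidx⟩ := by
            rw [← hBk]
            simp only [hL, List.getElem_drop, List.getElem_ofFn]
          subst hBeq
          have hent : ∀ i j, ∃ c : F,
              MvPolynomial.C c = E (M s.1 s.2 ⟨m + k', hidx⟩ i j) := by
            intro i j
            have hmem2 : E (M s.1 s.2 ⟨m + k', hidx⟩ i j) ∈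
                (⊥ : Subalgebra F (MvPolynomial (X ⊕ Y ⊕ Z) F)) := by
              refine aux_mem_supported E ⊥ (hMs s.1 s.2 _ i j) ?_
              intro v hv
              rw [Set.mem_singleton_iff] at hv
              subst hv
              rcases hσv : σ (⟨m + k', hidx⟩ : Fin _) with x | s'
              · exact absurd ((hσ _).mpr ⟨x, hσv⟩) (by simp)
              · rw [Algebra.mem_bot, MvPolynomial.algebraMap_eq]
                rcases s' with yv | j'
                · exact ⟨boolToField F (y yv), by simp [hE, hφ]⟩
                · exact ⟨boolToField F (α j'), by simp [hE, hφ]⟩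
            rw [Algebra.mem_bot, MvPolynomial.algebraMap_eq] at hmem2
            exact hmem2
          choose Nc hNc using hent
          refine ⟨Matrix.of Nc, Matrix.ext fun i j => ?_⟩
          rw [RingHom.mapMatrix_apply, Matrix.map_apply, AlgHom.mapMatrix_apply,
            Matrix.map_apply, Matrix.of_apply]
          exact hNc i j
        obtain ⟨NN, hNN⟩ := list_prod_mem hmem
        exact ⟨NN, by rw [← hNN, RingHom.mapMatrix_apply]⟩
      obtain ⟨N, hN⟩ := hdrop
      refine ⟨N, ?_⟩
      have h5 : E (a s.1) = ((L.map E.mapMatrix).prod) (i0 s) (i0 s) := by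
        rw [hMe s.1 s.2, ← map_list_prod (E.mapMatrix) L]
        rfl
      have h6 : (L.map E.mapMatrix).prod = Pre s * (N.map MvPolynomial.C) := by
        conv_lhs => rw [← List.take_append_drop m L]
        rw [List.map_append, List.prod_append, htake, hN, hPre]
      rw [h5, h6, Matrix.mul_apply]
      refine Finset.sum_congr rfl (fun i _ => ?_)
      rw [Matrix.map_apply]
    choose Nm hNm using hEa
    have hrep : (1 : MvPolynomial (X ⊕ Y ⊕ Z) F) =
        ∑ t : {p // p ∈ P₀} × Fin w,
          (Nm t.1 t.2 (i0 t.1) * boolToField F (SPLabel.evalb α (lab t.1))) •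
            (Pre t.1 (i0 t.1) t.2 * hat t.1) := by
      rw [Fintype.sum_prod_type]
      calc (1 : MvPolynomial (X ⊕ Y ⊕ Z) F) = ∑ p ∈ P₀, E (a p) * E p := hmain.symm
        _ = ∑ s ∈ P₀.attach, E (a s.1) * E s.1 :=
            (Finset.sum_attach P₀ (fun p => E (a p) * E p)).symm
        _ = _ := by
            rw [← Finset.univ_eq_attach]
            refine Finset.sum_congr rfl (fun s _ => ?_)
            have hEhat : E (hat s) = hat s := by
              refine aux_eqOn_supported E (AlgHom.id F _) (hhat s) ?_
              rintro v ⟨x, rfl⟩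
              simp [hE, hφ]
            have hEp : E s.1 =
                MvPolynomial.C (boolToField F (SPLabel.evalb α (lab s))) * hat s := by
              rcases hcase s with ⟨h1, h2⟩ | ⟨j, h1, h2⟩
              · rw [h2, hEhat, h1]
                norm_num [SPLabel.evalb, boolToField]
              · rw [h2, map_mul, hEhat, h1]
                congr 1
                simp [hE, hφ, SPLabel.evalb]
            rw [hNm s, hEp, Finset.sum_mul]
            refine Finset.sum_congr rfl (fun i _ => ?_)
            rw [MvPolynomial.smul_eq_C_mul, map_mul]
            ring
    dsimp only [SpanProgram.accepts]
    rw [hrep]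
    refine Submodule.sum_mem _ (fun t _ => ?_)
    by_cases hall : SPLabel.evalb α (lab t.1) = true
    · exact Submodule.smul_mem _ _ (Submodule.subset_span ⟨t, hall, rfl⟩)
    · have h7 : boolToField F (SPLabel.evalb α (lab t.1)) = 0 := by
        rw [Bool.not_eq_true] at hall
        rw [hall]; rfl
      rw [h7, mul_zero, zero_smul]
      exact Submodule.zero_mem _
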